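/- Let M be analytic with M(0) invertible, Λ ∈ ℂ^{p×p} invertible with σ(Λ) ⊂ Ω, and Y ∈ ℂ^{n×p}. Then (Ψ, Λ^{-1}) with Ψ(θ) := Y exp(θΛ) is an invariant pair of the operator 𝓑, i.e., (𝓑Ψ)(θ) = Ψ(θ)Λ^{-1} for all θ, if and only if 𝕄(Y, Λ) = 0. -/

import Mathlib

open NormedSpace
open scoped Matrix

/-- `𝕄(Y,Λ) = Σ_i A_i Y Λ^i` where `A_i = M^{(i)}(0)/i!` are the Taylor
coefficients of the analytic matrix function `M`. -/
noncomputable def MMfun {n p : ℕ} (A : ℕ → Matrix (Fin n) (Fin n) ℂ)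
    (Y : Matrix (Fin n) (Fin p) ℂ) (Λ : Matrix (Fin p) (Fin p) ℂ) :
    Matrix (Fin n) (Fin p) ℂ :=
  ∑' i : ℕ, A i * Y * Λ ^ i

section Helpers

variable {q r s : ℕ}

/-- Left multiplication by a fixed matrix as a continuous linear map. -/
noncomputable def mulLeftCLM (C : Matrix (Fin q) (Fin r) ℂ) :
    Matrix (Fin r) (Fin s) ℂ →L[ℂ] Matrix (Fin q) (Fin s) ℂ where
  toLinearMap :=
    { toFun := fun X => C * X
      map_add' := fun X₁ X₂ => Matrix.mul_add C X₁ X₂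
      map_smul' := fun c X => Matrix.mul_smul C c X }
  cont := continuous_const.matrix_mul continuous_id

/-- Right multiplication by a fixed matrix as a continuous linear map. -/
noncomputable def mulRightCLM (C : Matrix (Fin r) (Fin s) ℂ) :
    Matrix (Fin q) (Fin r) ℂ →L[ℂ] Matrix (Fin q) (Fin s) ℂ where
  toLinearMap :=
    { toFun := fun X => X * C
      map_add' := fun X₁ X₂ => Matrix.add_mul X₁ X₂ C
      map_smul' := fun c X => Matrix.smul_mul c X C }
  cont := continuous_id.matrix_mul continuous_const

lemma tsum_matrix_mul_left (C : Matrix (Fin q) (Fin r) ℂ)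
    {f : ℕ → Matrix (Fin r) (Fin s) ℂ} (hf : Summable f) :
    C * ∑' i, f i = ∑' i, C * f i :=
  (mulLeftCLM C).map_tsum hf

lemma tsum_matrix_mul_right (C : Matrix (Fin r) (Fin s) ℂ)
    {f : ℕ → Matrix (Fin q) (Fin r) ℂ} (hf : Summable f) :
    (∑' i, f i) * C = ∑' i, f i * C :=
  (mulRightCLM C).map_tsum hf

lemma summable_matrix_mul_left (C : Matrix (Fin q) (Fin r) ℂ)
    {f : ℕ → Matrix (Fin r) (Fin s) ℂ} (hf : Summable f) :
    Summable fun i => C * f i :=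
  hf.map (mulLeftCLM C) (mulLeftCLM C).continuous

end Helpers

section Aux

variable {n p : ℕ}

/-- The matrix exponential `s ↦ exp(sΛ)` is continuous in the real parameter. -/
lemma aux_cont (Λ : Matrix (Fin p) (Fin p) ℂ) :
    Continuous fun t : ℝ => exp ((t : ℂ) • Λ) := by
  letI : SeminormedRing (Matrix (Fin p) (Fin p) ℂ) := Matrix.linftyOpSemiNormedRing
  letI : NormedRing (Matrix (Fin p) (Fin p) ℂ) := Matrix.linftyOpNormedRing
  letI : NormedAlgebra ℂ (Matrix (Fin p) (Fin p) ℂ) := Matrix.linftyOpNormedAlgebra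
  letI : NormedAlgebra ℚ (Matrix (Fin p) (Fin p) ℂ) := NormedAlgebra.restrictScalars ℚ ℂ _
  exact exp_continuous.comp (Complex.continuous_ofReal.smul continuous_const)

/-- Entrywise derivative of `s ↦ Y exp(sΛ) Λ⁻¹`. -/
lemma aux_deriv (Y : Matrix (Fin n) (Fin p) ℂ) (Λ : Matrix (Fin p) (Fin p) ℂ)
    (a : Fin n) (b : Fin p) (s : ℝ) :
    HasDerivAt (fun t : ℝ => (Y * exp ((t : ℂ) • Λ) * Λ⁻¹) a b)
      ((Y * (exp ((s : ℂ) • Λ) * Λ) * Λ⁻¹) a b) s := by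
  letI : SeminormedRing (Matrix (Fin p) (Fin p) ℂ) := Matrix.linftyOpSemiNormedRing
  letI : NormedRing (Matrix (Fin p) (Fin p) ℂ) := Matrix.linftyOpNormedRing
  letI : NormedAlgebra ℂ (Matrix (Fin p) (Fin p) ℂ) := Matrix.linftyOpNormedAlgebra
  have hd0 := hasDerivAt_exp_smul_const (𝕂 := ℂ) (𝔸 := Matrix (Fin p) (Fin p) ℂ) Λ (s : ℂ)
  have hd : HasDerivAt (fun t : ℝ => exp ((t : ℂ) • Λ)) (exp ((s : ℂ) • Λ) * Λ) s := by
    have := (hd0.hasFDerivAt.restrictScalars ℝ).comp_hasDerivAt s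
      Complex.ofRealCLM.hasDerivAt
    simp at this
    exact this
  let L : Matrix (Fin p) (Fin p) ℂ →L[ℂ] ℂ :=
    { toLinearMap :=
        { toFun := fun X => (Y * X * Λ⁻¹) a b
          map_add' := by
            intro X₁ X₂
            simp [Matrix.mul_add, Matrix.add_mul]
          map_smul' := by
            intro c X
            show (Y * (c • X) * Λ⁻¹) a b = (RingHom.id ℂ) c • (Y * X * Λ⁻¹) a b
            rw [Matrix.mul_smul, Matrix.smul_mul]
            simp }
      cont := ((continuous_const.matrix_mul continuous_id).matrix_mul
        continuous_const).matrix_elem a b }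
  exact ((L.restrictScalars ℝ).hasFDerivAt
    (x := exp ((s : ℂ) • Λ))).comp_hasDerivAt s hd

end Aux

/-- Theorem 2.2: let `M(λ) = Σ_i λ^i A_i` be analytic with
`M(0) = A 0` invertible, `Λ` invertible, `Y ∈ ℂ^{n×p}`, and let
`B(λ) = M(0)⁻¹(M(0)−M(λ))/λ` have Taylor coefficients `Bc i`
(`M(0)·Bc i = −A_{i+1}`).  Then `(Ψ, Λ⁻¹)` with `Ψ(θ) = Y exp(θΛ)` is an
invariant pair of `𝓑`, i.e. `(𝓑Ψ)(θ) = Ψ(θ)Λ⁻¹` for all `θ`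
(with `(𝓑Ψ)(θ) = ∫₀^θ Ψ + Σ_i Bc i · Y Λ^i` acting columnwise/entrywise),
if and only if `𝕄(Y,Λ) = 0`. -/
theorem stmt9 {n p : ℕ} (A Bc : ℕ → Matrix (Fin n) (Fin n) ℂ)
    (Y : Matrix (Fin n) (Fin p) ℂ) (Λ : Matrix (Fin p) (Fin p) ℂ)
    (hΛ : IsUnit Λ) (hM0 : IsUnit (A 0))
    (hBc : ∀ i : ℕ, A 0 * Bc i = -(A (i + 1)))
    (hsumB : Summable fun i : ℕ => Bc i * (Y * Λ ^ i))
    (hsumM : Summable fun i : ℕ => A i * Y * Λ ^ i) :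
    (∀ (θ : ℝ) (a : Fin n) (b : Fin p),
        (∫ s in (0:ℝ)..θ, (Y * exp ((s : ℂ) • Λ)) a b) +
            (∑' i : ℕ, Bc i * (Y * Λ ^ i)) a b =
          ((Y * exp ((θ : ℂ) • Λ)) * Λ⁻¹) a b) ↔
      MMfun A Y Λ = 0 := by
  have hdet : IsUnit Λ.det := (Matrix.isUnit_iff_isUnit_det Λ).mp hΛ
  have hΛinv : Λ * Λ⁻¹ = 1 := Matrix.mul_nonsing_inv Λ hdet
  have hΛinv' : Λ⁻¹ * Λ = 1 := Matrix.nonsing_inv_mul Λ hdet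
  have hdet0 : IsUnit (A 0).det := (Matrix.isUnit_iff_isUnit_det (A 0)).mp hM0
  have hA0inv : (A 0)⁻¹ * A 0 = 1 := Matrix.nonsing_inv_mul (A 0) hdet0
  set S : Matrix (Fin n) (Fin p) ℂ := ∑' i : ℕ, Bc i * (Y * Λ ^ i) with hS
  -- the integral computation
  have hint : ∀ (θ : ℝ) (a : Fin n) (b : Fin p),
      (∫ t in (0:ℝ)..θ, (Y * exp ((t : ℂ) • Λ)) a b) =
        (Y * exp ((θ : ℂ) • Λ) * Λ⁻¹) a b - (Y * Λ⁻¹) a b := by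
    intro θ a b
    have hcont : Continuous fun t : ℝ => (Y * exp ((t : ℂ) • Λ)) a b :=
      (continuous_const.matrix_mul (aux_cont Λ)).matrix_elem a b
    have hfd : ∀ t ∈ Set.uIcc (0:ℝ) θ,
        HasDerivAt (fun u : ℝ => (Y * exp ((u : ℂ) • Λ) * Λ⁻¹) a b)
          ((Y * exp ((t : ℂ) • Λ)) a b) t := by
      intro t _
      have h := aux_deriv Y Λ a b t
      have e : Y * (exp ((t : ℂ) • Λ) * Λ) * Λ⁻¹ = Y * exp ((t : ℂ) • Λ) := by
        rw [← Matrix.mul_assoc Y (exp ((t : ℂ) • Λ)) Λ,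
          Matrix.mul_assoc (Y * exp ((t : ℂ) • Λ)) Λ Λ⁻¹, hΛinv, Matrix.mul_one]
      rwa [e] at h
    have h := intervalIntegral.integral_eq_sub_of_hasDerivAt hfd
      (hcont.intervalIntegrable 0 θ)
    rw [h]
    norm_num [exp_zero, Matrix.mul_one]
  -- summability of the shifted series
  have hT : Summable fun i : ℕ => A (i + 1) * (Y * Λ ^ i) := by
    have he : (fun i : ℕ => A (i + 1) * (Y * Λ ^ i)) =
        fun i : ℕ => -(A 0 * (Bc i * (Y * Λ ^ i))) := by
      funext i
      have : A 0 * (Bc i * (Y * Λ ^ i)) = A 0 * Bc i * (Y * Λ ^ i) :=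
        (Matrix.mul_assoc _ _ _).symm
      rw [this, hBc i, Matrix.neg_mul, neg_neg]
    rw [he]
    exact (summable_matrix_mul_left (A 0) hsumB).neg
  -- the key algebraic identity:  A 0 * S * Λ = A 0 * Y - MMfun A Y Λ
  have hkey : A 0 * S * Λ = A 0 * Y - MMfun A Y Λ := by
    have h1 : A 0 * S = -∑' i : ℕ, A (i + 1) * (Y * Λ ^ i) := by
      rw [hS, tsum_matrix_mul_left (A 0) hsumB, ← tsum_neg]
      congr 1
      funext i
      have : A 0 * (Bc i * (Y * Λ ^ i)) = A 0 * Bc i * (Y * Λ ^ i) :=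
        (Matrix.mul_assoc _ _ _).symm
      rw [this, hBc i, Matrix.neg_mul]
    have h2 : (∑' i : ℕ, A (i + 1) * (Y * Λ ^ i)) * Λ = MMfun A Y Λ - A 0 * Y := by
      rw [tsum_matrix_mul_right Λ hT]
      have h3 : (fun i : ℕ => A (i + 1) * (Y * Λ ^ i) * Λ) =
          fun i : ℕ => A (i + 1) * Y * Λ ^ (i + 1) := by
        funext i
        simp only [pow_succ, Matrix.mul_assoc]
      rw [h3]
      have h4 := hsumM.tsum_eq_zero_add
      rw [MMfun, h4, pow_zero, Matrix.mul_one, add_sub_cancel_left]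
    rw [h1, Matrix.neg_mul, h2, neg_sub]
  constructor
  · intro h
    have hSeq : S = Y * Λ⁻¹ := by
      ext a b
      have h0 := h 0 a b
      rw [hint 0 a b] at h0
      linear_combination h0
    rw [hSeq] at hkey
    have e : A 0 * (Y * Λ⁻¹) * Λ = A 0 * Y := by
      rw [Matrix.mul_assoc (A 0) (Y * Λ⁻¹) Λ, Matrix.mul_assoc Y Λ⁻¹ Λ, hΛinv',
        Matrix.mul_one]
    rw [e] at hkey
    exact (sub_eq_self.mp hkey.symm)
  · intro h
    have hSeq : S = Y * Λ⁻¹ := by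
      rw [h, sub_zero] at hkey
      have hSΛ : S * Λ = Y := by
        have := congrArg (fun X => (A 0)⁻¹ * X) hkey
        simpa [← Matrix.mul_assoc, hA0inv, Matrix.one_mul] using this
      calc S = S * (Λ * Λ⁻¹) := by rw [hΛinv, Matrix.mul_one]
        _ = S * Λ * Λ⁻¹ := by rw [Matrix.mul_assoc]
        _ = Y * Λ⁻¹ := by rw [hSΛ]
    intro θ a b
    rw [hint θ a b, hSeq]
    ring
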